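/- Every connected bipartite claw-free graph (a finite connected bipartite graph containing no induced K_{1,3}) is either a chordless path or a chordless cycle of even length. Consequently, a bipartite graph with a bipartition (W, B) is irreducible and claw-free if and only if it is a chordless path with |B| = |W| + 1, i.e. a chordless path of even length whose both endpoints lie in B. -/

import Mathlib

open SimpleGraph

/-- `S` is an independent set in `G`: pairwise non-adjacent vertices. -/
def IndepOn {V : Type*} (G : SimpleGraph V) (S : Set V) : Prop :=
  S.Pairwise fun u v => ¬ G.Adj u v

/-- `NSet G U` is the set of vertices adjacent to at least one vertex of `U`. -/
def NSet {V : Type*} (G : SimpleGraph V) (U : Set V) : Set V :=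
  {v | ∃ u ∈ U, G.Adj u v}

/-- `(W, B)` is a bipartition of `G` into two independent parts covering all vertices. -/
def IsBipartition {V : Type*} (G : SimpleGraph V) (W B : Set V) : Prop :=
  W ∪ B = Set.univ ∧ Disjoint W B ∧ IndepOn G W ∧ IndepOn G B

/-- A bipartite graph `G` with parts `W` and `B` is irreducible if
(a) `|W| = |B| - 1`, (b) every nonempty `A ⊆ W` satisfies `|A| < |N(A) ∩ B|`,
and (c) `G` is connected. -/
def IrreducibleBip {V : Type*} (G : SimpleGraph V) (W B : Set V) : Prop :=
  IsBipartition G W B ∧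
  W.ncard + 1 = B.ncard ∧
  (∀ A ⊆ W, A.Nonempty → A.ncard < (NSet G A ∩ B).ncard) ∧
  G.Connected

/-- The simple tree `T_k`: the star `K_{1,k}` with each edge subdivided once.
Vertex `0` is the centre, vertices `1,…,k` are the subdivision vertices `a_i`,
and vertices `k+1,…,2k` are the leaves `b_i = i + k`. -/
def simpleTree (k : ℕ) : SimpleGraph (Fin (2 * k + 1)) :=
  SimpleGraph.fromRel fun i j =>
    (i.val = 0 ∧ 1 ≤ j.val ∧ j.val ≤ k) ∨ (1 ≤ i.val ∧ i.val ≤ k ∧ j.val = i.val + k)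

/-- The tree `S_{1,1,3}`: three leaves at distances 1, 1, 3 from the unique degree-3
vertex `0`. Edges: 0-1, 0-2, 0-3, 3-4, 4-5. -/
def S113 : SimpleGraph (Fin 6) :=
  SimpleGraph.fromRel fun i j =>
    (i = 0 ∧ j = 1) ∨ (i = 0 ∧ j = 2) ∨ (i = 0 ∧ j = 3) ∨ (i = 3 ∧ j = 4) ∨ (i = 4 ∧ j = 5)

/-- The claw `K_{1,3}`-freeness. -/
def ClawFree {V : Type*} (G : SimpleGraph V) : Prop :=
  IsEmpty (completeBipartiteGraph (Fin 1) (Fin 3) ↪g G)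

/-- (1) Every finite connected bipartite claw-free graph is a chordless path or a
chordless cycle of even length. (2) Consequently, a bipartite graph with bipartition
`(W, B)` is irreducible and claw-free iff it is a chordless path of even length with
both endpoints (i.e. all even positions) in `B`, so that `|B| = |W| + 1`. -/

lemma image_neighborSet_induce {V : Type} (G : SimpleGraph V) (s : Set V) (x : ↥s) :
    Subtype.val '' ((G.induce s).neighborSet x) = G.neighborSet ↑x ∩ s := by
  ext w
  simp only [Set.mem_image, mem_neighborSet, comap_adj, Set.mem_inter_iff]
  constructor
  · rintro ⟨⟨w, hw⟩, h, rfl⟩; exact ⟨h, hw⟩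
  · rintro ⟨h, hw⟩; exact ⟨⟨w, hw⟩, h, rfl⟩

lemma ncard_neighborSet_induce {V : Type} (G : SimpleGraph V) (s : Set V) (x : ↥s) :
    ((G.induce s).neighborSet x).ncard = (G.neighborSet ↑x ∩ s).ncard := by
  rw [← image_neighborSet_induce, Set.ncard_image_of_injective _ Subtype.val_injective]

lemma reach_eq_of_no_nbr {V : Type} (G : SimpleGraph V) {v0 x : V}
    (h0 : G.neighborSet v0 = ∅) (h : G.Reachable v0 x) : x = v0 := by
  obtain ⟨w⟩ := h
  cases w with
  | nil => rfl
  | cons h p => exact absurd h (by intro hadj; exact (Set.eq_empty_iff_forall_notMem.1 h0) _ hadj)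

lemma walk_to_induced {V : Type} (G : SimpleGraph V) (v0 u : V) :
    ∀ (x : V) (_ : G.Walk x v0) (hnb : G.neighborSet v0 = {u}) (hu : u ≠ v0) (hx : x ≠ v0),
      (G.induce {y | y ≠ v0}).Reachable ⟨x, hx⟩ ⟨u, hu⟩ := by
  intro x w
  induction w with
  | nil => intro _ _ hx; exact absurd rfl hx
  | @cons a b c h p ih =>
    intro hnb hu hx
    by_cases hb : b = c
    · subst hb
      have ha : a ∈ G.neighborSet b := h.symm
      rw [hnb] at ha
      rw [Set.mem_singleton_iff] at ha
      subst ha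
      exact Reachable.refl _
    · have hadj : (G.induce {y | y ≠ c}).Adj ⟨a, hx⟩ ⟨b, hb⟩ := h
      exact hadj.reachable.trans (ih hnb hu hb)

lemma path_classify : ∀ (n : ℕ) (V : Type) (G : SimpleGraph V),
    Nat.card V = n + 1 → G.Connected → (∀ v, (G.neighborSet v).ncard ≤ 2) →
    ∀ v0 : V, (G.neighborSet v0).ncard ≤ 1 →
    ∃ φ : pathGraph (n+1) ≃g G, φ 0 = v0 := by
  intro n
  induction n with
  | zero =>
    intro V G hcard hconn hdeg v0 hv0
    haveI : Finite V := Nat.finite_of_card_ne_zero (by omega)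
    haveI : Subsingleton V := (Nat.card_eq_one_iff_unique.1 hcard).1
    refine ⟨⟨(Finite.equivFinOfCardEq hcard).symm, ?_⟩, Subsingleton.elim _ _⟩
    intro i j
    have hij : i = j := Fin.ext (by omega)
    subst hij
    constructor
    · intro h; exact absurd rfl h.ne
    · intro h; rw [pathGraph_adj] at h; simp at h
  | succ n ih =>
    intro V G hcard hconn hdeg v0 hv0
    haveI : Finite V := Nat.finite_of_card_ne_zero (by omega)
    -- v0 has a neighbor
    have hne : G.neighborSet v0 ≠ ∅ := by
      intro h0
      haveI : Nontrivial V := Finite.one_lt_card_iff_nontrivial.1 (by omega)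
      obtain ⟨x, hx⟩ := exists_ne v0
      exact hx (reach_eq_of_no_nbr G h0 (hconn v0 x))
    have h1 : (G.neighborSet v0).ncard = 1 := by
      have : 1 ≤ (G.neighborSet v0).ncard := by
        rw [Nat.one_le_iff_ne_zero]
        intro h
        exact hne ((Set.ncard_eq_zero (Set.toFinite _)).1 h)
      omega
    obtain ⟨u, hu⟩ := Set.ncard_eq_one.1 h1
    have huv0 : u ≠ v0 := by
      have : G.Adj v0 u := by rw [← mem_neighborSet, hu]; rfl
      exact this.ne'
    set s : Set V := {y | y ≠ v0} with hs
    set G' := G.induce s with hG'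
    -- cardinality
    have hcard' : Nat.card ↥s = n + 1 := by
      have h2 : s = {v0}ᶜ := by ext y; simp [hs]
      have h3 := Set.ncard_add_ncard_compl ({v0} : Set V)
      rw [Set.ncard_singleton] at h3
      rw [Nat.card_coe_set_eq, h2]
      omega
    -- connectivity
    have hreach : ∀ x : ↥s, G'.Reachable x ⟨u, huv0⟩ := by
      rintro ⟨x, hx⟩
      obtain ⟨w⟩ := hconn x v0
      exact walk_to_induced G v0 u x w hu huv0 hx
    have hconn' : G'.Connected := by
      haveI : Nonempty ↥s := ⟨⟨u, huv0⟩⟩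
      exact SimpleGraph.Connected.mk (fun x y => (hreach x).trans (hreach y).symm)
    -- degree bounds
    have hdegle : ∀ x : ↥s, ((G'.neighborSet x)).ncard ≤ (G.neighborSet ↑x).ncard := by
      intro x
      rw [hG', ncard_neighborSet_induce]
      exact Set.ncard_le_ncard Set.inter_subset_left (Set.toFinite _)
    have hdeg' : ∀ x : ↥s, (G'.neighborSet x).ncard ≤ 2 := fun x => (hdegle x).trans (hdeg _)
    have hdegu : (G'.neighborSet ⟨u, huv0⟩).ncard ≤ 1 := by
      rw [hG', ncard_neighborSet_induce]
      have hsub : G.neighborSet u ∩ s ⊆ G.neighborSet u \ {v0} := by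
        intro y hy; exact ⟨hy.1, hy.2⟩
      have hv0u : v0 ∈ G.neighborSet u := by
        have : G.Adj v0 u := by rw [← mem_neighborSet, hu]; rfl
        exact this.symm
      calc (G.neighborSet u ∩ s).ncard ≤ (G.neighborSet u \ {v0}).ncard :=
            Set.ncard_le_ncard hsub (Set.toFinite _)
        _ = (G.neighborSet u).ncard - 1 := by
            rw [Set.ncard_diff_singleton_of_mem hv0u]
        _ ≤ 1 := by have := hdeg u; omega
    obtain ⟨ψ, hψ0⟩ := ih ↥s G' hcard' hconn' hdeg' ⟨u, huv0⟩ hdegu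
    -- build the equivalence
    haveI : DecidableEq V := Classical.decEq V
    let e : Fin (n+2) ≃ V :=
      (finSuccEquiv (n+1)).trans ((Equiv.optionCongr ψ.toEquiv).trans (Equiv.optionSubtypeNe v0))
    have he0 : e 0 = v0 := by simp [e]; rfl
    have hesucc : ∀ i : Fin (n+1), e i.succ = ↑(ψ i) := by
      intro i; simp [e]; rfl
    have hadjv0 : ∀ x : V, G.Adj v0 x ↔ x = u := by
      intro x; rw [← mem_neighborSet, hu, Set.mem_singleton_iff]
    refine ⟨⟨e, ?_⟩, he0⟩
    intro i j
    induction i using Fin.cases with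
    | zero =>
      induction j using Fin.cases with
      | zero =>
        rw [he0]
        constructor
        · intro h; exact absurd rfl h.ne
        · intro h; rw [pathGraph_adj] at h; simp at h
      | succ jj =>
        rw [he0, hesucc, pathGraph_adj, hadjv0]
        constructor
        · intro h
          have : ψ jj = ⟨u, huv0⟩ := Subtype.val_injective h
          rw [← hψ0] at this
          have : jj = 0 := ψ.toEquiv.injective this
          subst this
          left; simp
        · intro h
          have hj0 : jj = 0 := by
            rcases h with h | h
            · simp only [Fin.val_zero, Fin.val_succ] at h
              exact Fin.ext (by simp only [Fin.val_zero]; omega)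
            · simp only [Fin.val_zero, Fin.val_succ] at h; omega
          subst hj0
          rw [hψ0]
    | succ ii =>
      induction j using Fin.cases with
      | zero =>
        rw [he0, hesucc, pathGraph_adj]
        rw [G.adj_comm, hadjv0]
        constructor
        · intro h
          have : ψ ii = ⟨u, huv0⟩ := Subtype.val_injective h
          rw [← hψ0] at this
          have : ii = 0 := ψ.toEquiv.injective this
          subst this
          right; simp
        · intro h
          have hi0 : ii = 0 := by
            rcases h with h | h
            · simp only [Fin.val_zero, Fin.val_succ] at h; omega
            · simp only [Fin.val_zero, Fin.val_succ] at h
              exact Fin.ext (by simp only [Fin.val_zero]; omega)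
          subst hi0
          rw [hψ0]
      | succ jj =>
        rw [hesucc, hesucc]
        have : G.Adj ↑(ψ ii) ↑(ψ jj) ↔ G'.Adj (ψ ii) (ψ jj) := by
          constructor
          · intro h; exact h
          · intro h; exact h
        rw [this, ψ.map_adj_iff, pathGraph_adj, pathGraph_adj]
        simp only [Fin.val_succ]
        omega



lemma fin_sub_one_iff {m : ℕ} (hm : 3 ≤ m) (u v : Fin m) :
    (u - v).val = 1 ↔ (v.val + 1 = u.val) ∨ (u.val = 0 ∧ v.val = m - 1) := by
  rcases le_or_gt v u with h | h
  · rw [Fin.coe_sub_iff_le.2 h]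
    have := u.isLt
    have := v.isLt
    constructor
    · intro h1; left; omega
    · rintro (h1 | ⟨h1, h2⟩) <;> omega
  · rw [Fin.coe_sub_iff_lt.2 h]
    have := u.isLt
    have := v.isLt
    constructor
    · intro h1; right; omega
    · rintro (h1 | ⟨h1, h2⟩) <;> omega

lemma cycle_adj_iff {m : ℕ} (hm : 3 ≤ m) (i j : Fin m) :
    (cycleGraph m).Adj i j ↔ (pathGraph m).Adj i j ∨
      (i.val = 0 ∧ j.val = m - 1) ∨ (j.val = 0 ∧ i.val = m - 1) := by
  rw [cycleGraph_adj', pathGraph_adj, fin_sub_one_iff hm, fin_sub_one_iff hm]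
  tauto

lemma iso_ncard_neighborSet {V W : Type} {G : SimpleGraph V} {H : SimpleGraph W}
    (φ : G ≃g H) (v : V) : (H.neighborSet (φ v)).ncard = (G.neighborSet v).ncard := by
  have himg : φ '' (G.neighborSet v) = H.neighborSet (φ v) := by
    ext w
    constructor
    · rintro ⟨u, hu, rfl⟩; exact φ.map_adj_iff.2 hu
    · intro hw; exact ⟨φ.symm w, by simpa using φ.symm.map_adj_iff.2 hw, by simp⟩
  rw [← himg, Set.ncard_image_of_injective _ φ.injective]

-- endpoints of a path are the only degree-1 vertices
lemma path_deg_one {m : ℕ} (hm : 2 ≤ m) (j : Fin m)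
    (h : ((pathGraph m).neighborSet j).ncard ≤ 1) : j.val = 0 ∨ j.val = m - 1 := by
  by_contra hcon
  push_neg at hcon
  have hj := j.isLt
  have h1 : 0 < j.val := Nat.pos_of_ne_zero hcon.1
  have h2 : j.val < m - 1 := by omega
  have hmem1 : (⟨j.val - 1, by omega⟩ : Fin m) ∈ (pathGraph m).neighborSet j := by
    rw [mem_neighborSet, pathGraph_adj]
    right
    show j.val - 1 + 1 = j.val
    omega
  have hmem2 : (⟨j.val + 1, by omega⟩ : Fin m) ∈ (pathGraph m).neighborSet j := by
    rw [mem_neighborSet, pathGraph_adj]; left; rfl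
  have hne : (⟨j.val - 1, by omega⟩ : Fin m) ≠ (⟨j.val + 1, by omega⟩ : Fin m) := by
    intro hcc
    have := congrArg Fin.val hcc
    simp only [] at this
    omega
  have hsub : ({⟨j.val - 1, by omega⟩, ⟨j.val + 1, by omega⟩} : Set (Fin m)) ⊆
      (pathGraph m).neighborSet j := by
    intro y hy; rcases hy with rfl | rfl
    · exact hmem1
    · exact hmem2
  have := Set.ncard_le_ncard hsub (Set.toFinite _)
  rw [Set.ncard_pair hne] at this
  omega

-- handshake: a closed set cannot have a unique odd-degree vertex
lemma no_unique_odd {V : Type} [Fintype V] (G : SimpleGraph V) (C : Set V)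
    (hC : ∀ x ∈ C, ∀ y, G.Adj x y → y ∈ C) (v0 : V) (hv0 : v0 ∈ C)
    (hodd : Odd (G.neighborSet v0).ncard)
    (hrest : ∀ x ∈ C, x ≠ v0 → ¬ Odd (G.neighborSet x).ncard) : False := by
  classical
  haveI : Fintype ↥C := Fintype.ofFinite _
  set H := G.induce C with hH
  haveI : DecidableRel H.Adj := Classical.decRel _
  have hdegeq : ∀ x : ↥C, H.degree x = (G.neighborSet ↑x).ncard := by
    intro x
    rw [← card_neighborSet_eq_degree]
    have h1 : (H.neighborSet x).ncard = (G.neighborSet ↑x ∩ C).ncard :=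
      ncard_neighborSet_induce G C x
    have h2 : G.neighborSet ↑x ∩ C = G.neighborSet ↑x := by
      apply Set.inter_eq_left.2
      intro y hy
      exact hC ↑x x.2 y hy
    rw [Set.ncard_eq_toFinset_card', Set.toFinset_card] at h1
    rw [h1, h2]
  obtain ⟨k, hk⟩ := H.even_card_odd_degree_vertices
  have : (Finset.univ.filter fun v : ↥C => Odd (H.degree v)) = {⟨v0, hv0⟩} := by
    ext x
    simp only [Finset.mem_filter, Finset.mem_univ, true_and, Finset.mem_singleton, hdegeq]
    constructor
    · intro hx
      by_contra hxx
      exact hrest ↑x x.2 (fun hh => hxx (Subtype.ext hh)) hx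
    · rintro rfl; exact hodd
  rw [this] at hk
  rw [Finset.card_singleton] at hk
  omega

lemma reach_delete {V : Type} (G : SimpleGraph V) (v0 u : V) :
    ∀ (x : V) (_ : G.Walk x v0),
      (G.deleteEdges {s(v0,u)}).Reachable x v0 ∨ (G.deleteEdges {s(v0,u)}).Reachable x u := by
  intro x w
  induction w with
  | nil => left; exact Reachable.refl _
  | @cons a b c h p ih =>
    by_cases he : s(a, b) = s(c, u)
    · rw [Sym2.eq_iff] at he
      rcases he with ⟨h1, h2⟩ | ⟨h1, h2⟩
      · left; rw [h1]
      · right; rw [h1]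
    · have hadj : (G.deleteEdges {s(c,u)}).Adj a b := by
        rw [deleteEdges_adj]
        exact ⟨h, by simpa using he⟩
      rcases ih with h1 | h1
      · left; exact hadj.reachable.trans h1
      · right; exact hadj.reachable.trans h1

lemma card_ge_three {V : Type} [Fintype V] (a b c : V) (hab : a ≠ b) (hac : a ≠ c)
    (hbc : b ≠ c) : 3 ≤ Nat.card V := by
  have h1 : ({a, b, c} : Set V).ncard = 3 := by
    rw [Set.ncard_insert_of_notMem (by simp [hab, hac]) (Set.toFinite _),
      Set.ncard_pair hbc]
  have h2 : ({a, b, c} : Set V).ncard ≤ Set.univ.ncard :=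
    Set.ncard_le_ncard (Set.subset_univ _) (Set.toFinite _)
  rw [Set.ncard_univ] at h2
  omega

lemma cycle_classify {V : Type} [Fintype V] (G : SimpleGraph V)
    (hconn : G.Connected) (hdeg : ∀ v, (G.neighborSet v).ncard = 2) :
    3 ≤ Nat.card V ∧ Nonempty (G ≃g cycleGraph (Nat.card V)) := by
  classical
  obtain ⟨v0⟩ := hconn.nonempty
  obtain ⟨u, w, huw, hN⟩ := Set.ncard_eq_two.1 (hdeg v0)
  have hadj_u : G.Adj v0 u := by rw [← mem_neighborSet, hN]; simp
  have hadj_w : G.Adj v0 w := by rw [← mem_neighborSet, hN]; simp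
  have huv0 : u ≠ v0 := hadj_u.ne'
  have hwv0 : w ≠ v0 := hadj_w.ne'
  have hcard3 : 3 ≤ Nat.card V := card_ge_three v0 u w (Ne.symm huv0) (Ne.symm hwv0) huw
  refine ⟨hcard3, ?_⟩
  set G' := G.deleteEdges {s(v0, u)} with hG'
  -- neighbor sets in G'
  have hsym2 : ∀ a b : V, s(a,b) = s(v0,u) ↔ (a = v0 ∧ b = u) ∨ (a = u ∧ b = v0) :=
    fun a b => Sym2.eq_iff
  have hNv0' : G'.neighborSet v0 = {w} := by
    ext y
    simp only [mem_neighborSet, hG', deleteEdges_adj, Set.mem_singleton_iff]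
    constructor
    · rintro ⟨hy, hne⟩
      have : y ∈ ({u, w} : Set V) := by rw [← hN]; exact hy
      rcases this with rfl | rfl
      · exact absurd (by simp) hne
      · rfl
    · rintro rfl
      refine ⟨hadj_w, ?_⟩
      simp only [Set.mem_singleton_iff, hsym2]
      rintro (⟨-, h⟩ | ⟨h, -⟩)
      · exact huw h.symm
      · exact huv0 h.symm
  have hNu' : G'.neighborSet u = G.neighborSet u \ {v0} := by
    ext y
    simp only [mem_neighborSet, hG', deleteEdges_adj, Set.mem_diff, Set.mem_singleton_iff]
    constructor
    · rintro ⟨hy, hne⟩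
      refine ⟨hy, ?_⟩
      rintro rfl
      exact hne (by simp only [Set.mem_singleton_iff, hsym2]; tauto)
    · rintro ⟨hy, hne⟩
      refine ⟨hy, ?_⟩
      simp only [Set.mem_singleton_iff, hsym2]
      rintro (⟨h, -⟩ | ⟨-, h⟩)
      · exact huv0 h
      · exact hne h
  have hNx' : ∀ x, x ≠ v0 → x ≠ u → G'.neighborSet x = G.neighborSet x := by
    intro x hx1 hx2
    ext y
    simp only [mem_neighborSet, hG', deleteEdges_adj, Set.mem_singleton_iff, hsym2]
    constructor
    · exact fun h => h.1
    · intro h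
      exact ⟨h, by tauto⟩
  have hdv0 : (G'.neighborSet v0).ncard = 1 := by rw [hNv0', Set.ncard_singleton]
  have hdu : (G'.neighborSet u).ncard = 1 := by
    rw [hNu', Set.ncard_diff_singleton_of_mem (by exact hadj_u.symm), hdeg]
  have hdeg' : ∀ x, (G'.neighborSet x).ncard ≤ 2 := by
    intro x
    by_cases h1 : x = v0
    · subst h1; omega
    by_cases h2 : x = u
    · subst h2; omega
    · rw [hNx' x h1 h2, hdeg]
  -- connectivity of G'
  have hdich : ∀ x, G'.Reachable x v0 ∨ G'.Reachable x u := by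
    intro x
    obtain ⟨wk⟩ := hconn x v0
    exact reach_delete G v0 u x wk
  have hr : G'.Reachable u v0 := by
    by_contra hr
    set C : Set V := {x | G'.Reachable x v0} with hC
    have hclosed : ∀ x ∈ C, ∀ y, G'.Adj x y → y ∈ C := by
      intro x hx y hy
      exact (hy.symm.reachable).trans hx
    have hv0C : v0 ∈ C := Reachable.refl _
    have huC : u ∉ C := hr
    refine no_unique_odd G' C hclosed v0 hv0C (by rw [hdv0]; exact odd_one) ?_
    intro x hx hxv0
    have hxu : x ≠ u := fun h => huC (h ▸ hx)
    rw [hNx' x hxv0 hxu, hdeg]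
    simp
  have hconn' : G'.Connected := by
    haveI : Nonempty V := ⟨v0⟩
    refine SimpleGraph.Connected.mk (fun x y => ?_)
    have h1 : G'.Reachable x v0 := by
      rcases hdich x with h | h
      · exact h
      · exact h.trans hr
    have h2 : G'.Reachable y v0 := by
      rcases hdich y with h | h
      · exact h
      · exact h.trans hr
    exact h1.trans h2.symm
  -- classify G' as a path
  obtain ⟨m, hm⟩ : ∃ m, Nat.card V = m + 1 := ⟨Nat.card V - 1, by omega⟩
  obtain ⟨φ, hφ0⟩ := path_classify m V G' hm hconn' hdeg' v0 (by omega)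
  -- u is the other endpoint
  have hju : (φ.symm u).val = m := by
    have h1 : ((pathGraph (m+1)).neighborSet (φ.symm u)).ncard = 1 := by
      have := iso_ncard_neighborSet φ (φ.symm u)
      simp only [RelIso.apply_symm_apply] at this
      omega
    rcases path_deg_one (by omega) (φ.symm u) (by omega) with h | h
    · exfalso
      have : φ.symm u = 0 := Fin.ext (by simpa using h)
      have : u = φ 0 := by rw [← this]; simp
      rw [hφ0] at this
      exact huv0 this
    · simpa using h
  have hev0 : φ.symm v0 = 0 := by rw [← hφ0]; simp
  -- build the cycle iso
  have hGadj : ∀ a b, G.Adj a b ↔ G'.Adj a b ∨ (a = v0 ∧ b = u) ∨ (a = u ∧ b = v0) := by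
    intro a b
    simp only [hG', deleteEdges_adj, Set.mem_singleton_iff, hsym2]
    constructor
    · intro h; tauto
    · rintro (⟨h, -⟩ | ⟨rfl, rfl⟩ | ⟨rfl, rfl⟩)
      · exact h
      · exact hadj_u
      · exact hadj_u.symm
  have hiv0 : ∀ i : Fin (m+1), φ i = v0 ↔ i.val = 0 := by
    intro i
    rw [← hφ0, (RelIso.injective φ).eq_iff]
    exact ⟨fun h => by simp [h], fun h => Fin.ext (by simpa using h)⟩
  have hiu : ∀ i : Fin (m+1), φ i = u ↔ i.val = m := by
    intro i
    constructor
    · intro h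
      have h2 : i = φ.symm u := by rw [← h]; simp
      rw [h2, hju]
    · intro h
      have h2 : i = φ.symm u := Fin.ext (by rw [h, hju])
      rw [h2]; simp
  rw [hm]
  refine ⟨(RelIso.symm (⟨φ.toEquiv, ?_⟩ : cycleGraph (m+1) ≃g G))⟩
  intro i j
  show G.Adj (φ i) (φ j) ↔ _
  rw [hGadj, φ.map_adj_iff, cycle_adj_iff (by omega), hiv0, hiv0, hiu, hiu]
  have hm1 : m + 1 - 1 = m := rfl
  rw [hm1]
  tauto

section Bip
variable {V : Type} {G : SimpleGraph V} {W B : Set V}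

lemma bip_cases (h : IsBipartition G W B) (u : V) : u ∈ W ∨ u ∈ B := by
  have := h.1
  have : u ∈ W ∪ B := by rw [this]; trivial
  exact this

lemma bip_not_both (h : IsBipartition G W B) {u : V} (hW : u ∈ W) (hB : u ∈ B) : False :=
  Set.disjoint_left.1 h.2.1 hW hB

lemma bip_adj_W (h : IsBipartition G W B) {u v : V} (hadj : G.Adj u v) (hu : u ∈ W) : v ∈ B := by
  rcases bip_cases h v with hv | hv
  · exact absurd hadj (h.2.2.1 hu hv hadj.ne)
  · exact hv

lemma bip_adj_B (h : IsBipartition G W B) {u v : V} (hadj : G.Adj u v) (hu : u ∈ B) : v ∈ W := by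
  rcases bip_cases h v with hv | hv
  · exact hv
  · exact absurd hadj (h.2.2.2 hu hv hadj.ne)

lemma clawfree_no_three (hcf : ClawFree G) (v a b c : V)
    (ha : G.Adj v a) (hb : G.Adj v b) (hc : G.Adj v c)
    (hab : a ≠ b) (hac : a ≠ c) (hbc : b ≠ c)
    (nab : ¬G.Adj a b) (nac : ¬G.Adj a c) (nbc : ¬G.Adj b c) : False := by
  apply hcf.false
  refine ⟨⟨Sum.elim (fun _ => v) ![a, b, c], ?_⟩, ?_⟩
  · rintro (x | x) (y | y) h
    · simp [Subsingleton.elim x y]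
    · exfalso
      simp only [Sum.elim_inl, Sum.elim_inr] at h
      fin_cases y <;> simp at h <;> subst h
      · exact ha.ne rfl
      · exact hb.ne rfl
      · exact hc.ne rfl
    · exfalso
      simp only [Sum.elim_inl, Sum.elim_inr] at h
      fin_cases x <;> simp at h <;> subst h
      · exact ha.ne rfl
      · exact hb.ne rfl
      · exact hc.ne rfl
    · congr 1
      fin_cases x <;> fin_cases y <;> simp_all <;> omega
  · have nba : ¬G.Adj b a := fun h => nab h.symm
    have nca : ¬G.Adj c a := fun h => nac h.symm
    have ncb : ¬G.Adj c b := fun h => nbc h.symm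
    rintro (x | x) (y | y) <;>
      simp only [Function.Embedding.coeFn_mk, Sum.elim_inl, Sum.elim_inr,
        completeBipartiteGraph_adj, Sum.isLeft_inl, Sum.isRight_inl, Sum.isLeft_inr,
        Sum.isRight_inr, and_false, false_and, and_true, true_and, and_self, or_self,
        or_false, false_or, iff_false, iff_true]
    · constructor
      · intro h; exact absurd rfl h.ne
      · intro h; simp at h
    · refine iff_of_true ?_ (by simp)
      fin_cases y <;> simp_all [Function.Embedding.coeFn_mk]
      exacts [ha, hb, hc]
    · refine iff_of_true ?_ (by simp)
      have : ∀ y, G.Adj v (![a, b, c] y) := by intro y; fin_cases y <;> simp_all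
      exact (this x).symm
    · refine iff_of_false ?_ (by simp)
      fin_cases x <;> fin_cases y <;> simp_all [Function.Embedding.coeFn_mk]
      exacts [nab, nac, nba, nbc, nca, ncb]

end Bip

section Bip2
variable {V : Type} {G : SimpleGraph V} {W B : Set V}

lemma clawfree_deg_le (hbip : IsBipartition G W B) (hcf : ClawFree G) (v : V) :
    (G.neighborSet v).ncard ≤ 2 := by
  by_contra hcon
  push_neg at hcon
  obtain ⟨t, hts, ht⟩ := Set.exists_subset_card_eq hcon
  rw [Set.ncard_eq_three] at ht
  obtain ⟨a, b, c, hab, hac, hbc, rfl⟩ := ht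
  have ha : G.Adj v a := hts (by simp)
  have hb : G.Adj v b := hts (by simp)
  have hc : G.Adj v c := hts (by simp)
  have hopp : ∀ x y : V, G.Adj v x → G.Adj v y → x ≠ y → ¬G.Adj x y := by
    intro x y hx hy hxy hadj
    rcases bip_cases hbip v with hv | hv
    · exact bip_not_both hbip (bip_adj_B hbip hadj (bip_adj_W hbip hx hv)) (bip_adj_W hbip hy hv)
    · exact bip_not_both hbip (bip_adj_B hbip hy hv) (bip_adj_W hbip hadj (bip_adj_B hbip hx hv))
  exact clawfree_no_three hcf v a b c ha hb hc hab hac hbc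
    (hopp a b ha hb hab) (hopp a c ha hc hac) (hopp b c hb hc hbc)

end Bip2

lemma path_alt {n : ℕ} {W B : Set (Fin (n+1))} (hbip : IsBipartition (pathGraph (n+1)) W B) :
    ∀ i : Fin (n+1), i ∈ B ↔ (Even i.val ↔ (0 : Fin (n+1)) ∈ B) := by
  have key : ∀ k (h : k < n+1), (⟨k, h⟩ : Fin (n+1)) ∈ B ↔ (Even k ↔ (0 : Fin (n+1)) ∈ B) := by
    intro k
    induction k with
    | zero =>
      intro h
      have : (⟨0, h⟩ : Fin (n+1)) = 0 := rfl
      rw [this]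
      have he : Even (0:ℕ) := Even.zero
      tauto
    | succ k ih =>
      intro h
      have hk : k < n + 1 := by omega
      have hadj : (pathGraph (n+1)).Adj ⟨k, hk⟩ ⟨k+1, h⟩ := by
        rw [pathGraph_adj]; left; rfl
      have h1 : (⟨k+1, h⟩ : Fin (n+1)) ∈ B ↔ (⟨k, hk⟩ : Fin (n+1)) ∉ B := by
        constructor
        · intro hB hB'
          exact absurd hB (fun hB => bip_not_both hbip (bip_adj_B hbip hadj hB') hB)
        · intro hnB
          rcases bip_cases hbip ⟨k, hk⟩ with hW | hB'
          · exact bip_adj_W hbip hadj hW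
          · exact absurd hB' hnB
      rw [h1, ih hk, Nat.even_add_one]
      tauto
  intro i
  have : i = ⟨i.val, i.isLt⟩ := rfl
  rw [this]
  exact key i.val i.isLt

lemma count_evens (k : ℕ) : {i : Fin (2*k+1) | Even i.val}.ncard = k + 1 := by
  classical
  have himg : {i : Fin (2*k+1) | Even i.val} =
      (fun j : Fin (k+1) => (⟨2*j.val, by have := j.isLt; omega⟩ : Fin (2*k+1))) '' Set.univ := by
    ext i
    simp only [Set.mem_setOf_eq, Set.image_univ, Set.mem_range]
    constructor
    · rintro ⟨t, ht⟩
      have hlt : t < k + 1 := by have := i.isLt; omega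
      exact ⟨⟨t, hlt⟩, Fin.ext (by simp; omega)⟩
    · rintro ⟨j, rfl⟩
      exact ⟨j.val, by simp [two_mul]⟩
  rw [himg, Set.ncard_image_of_injective _ (fun a b hab => Fin.ext (by
      have := congrArg Fin.val hab
      simp only [] at this
      omega)), Set.ncard_univ, Nat.card_eq_fintype_card, Fintype.card_fin]

lemma count_odds (k : ℕ) : {i : Fin (2*k+1) | ¬ Even i.val}.ncard = k := by
  classical
  have himg : {i : Fin (2*k+1) | ¬ Even i.val} =
      (fun j : Fin k => (⟨2*j.val+1, by have := j.isLt; omega⟩ : Fin (2*k+1))) '' Set.univ := by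
    ext i
    simp only [Set.mem_setOf_eq, Set.image_univ, Set.mem_range]
    constructor
    · intro hodd
      rw [Nat.not_even_iff_odd] at hodd
      obtain ⟨t, ht⟩ := hodd
      have hlt : t < k := by have := i.isLt; omega
      exact ⟨⟨t, hlt⟩, Fin.ext (by simp; omega)⟩
    · rintro ⟨j, rfl⟩
      simp only []
      rw [Nat.not_even_iff_odd]
      exact ⟨j.val, by omega⟩
  rw [himg, Set.ncard_image_of_injective _ (fun a b hab => Fin.ext (by
      have := congrArg Fin.val hab
      simp only [] at this
      omega)), Set.ncard_univ, Nat.card_eq_fintype_card, Fintype.card_fin]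

lemma NSet_image {V V' : Type} {G : SimpleGraph V} {H : SimpleGraph V'} (φ : G ≃g H)
    (A : Set V) : NSet H (⇑φ '' A) = ⇑φ '' NSet G A := by
  ext y
  constructor
  · rintro ⟨x, ⟨a, ha, rfl⟩, hadj⟩
    refine ⟨φ.symm y, ⟨a, ha, ?_⟩, by simp⟩
    have : H.Adj (φ a) (φ (φ.symm y)) := by simpa using hadj
    exact φ.map_adj_iff.1 this
  · rintro ⟨x, ⟨a, ha, hadj⟩, rfl⟩
    exact ⟨φ a, ⟨a, ha, rfl⟩, φ.map_adj_iff.2 hadj⟩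

lemma bip_map {V V' : Type} {G : SimpleGraph V} {H : SimpleGraph V'} (φ : G ≃g H)
    {W B : Set V} (h : IsBipartition G W B) : IsBipartition H (⇑φ '' W) (⇑φ '' B) := by
  obtain ⟨hu, hd, hiW, hiB⟩ := h
  refine ⟨?_, ?_, ?_, ?_⟩
  · rw [← Set.image_union, hu, Set.image_univ, Set.range_eq_univ.2 (φ.surjective)]
  · exact (Set.disjoint_image_iff φ.injective).2 hd
  · rintro _ ⟨u, hu', rfl⟩ _ ⟨v, hv', rfl⟩ hne hadj
    exact hiW hu' hv' (fun h => hne (h ▸ rfl)) (φ.map_adj_iff.1 hadj)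
  · rintro _ ⟨u, hu', rfl⟩ _ ⟨v, hv', rfl⟩ hne hadj
    exact hiB hu' hv' (fun h => hne (h ▸ rfl)) (φ.map_adj_iff.1 hadj)

lemma connected_map {V V' : Type} {G : SimpleGraph V} {H : SimpleGraph V'} (φ : G ≃g H)
    (h : G.Connected) : H.Connected := by
  haveI : Nonempty V' := ⟨φ h.nonempty.some⟩
  refine SimpleGraph.Connected.mk (fun x y => ?_)
  have := (h (φ.symm x) (φ.symm y)).map φ.toHom
  simpa using this

lemma clawfree_of_path {V : Type} {G : SimpleGraph V} {n : ℕ} (φ : pathGraph n ≃g G) :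
    ClawFree G := by
  constructor
  intro e
  let f := (SimpleGraph.Embedding.comp φ.symm.toEmbedding e)
  have hadj : ∀ i : Fin 3, (pathGraph n).Adj (f (Sum.inl 0)) (f (Sum.inr i)) := by
    intro i
    apply f.map_adj_iff.2
    simp [completeBipartiteGraph_adj]
  have hne : ∀ i j : Fin 3, i ≠ j → f (Sum.inr i) ≠ f (Sum.inr j) := by
    intro i j hij hc
    exact hij (Sum.inr_injective (f.injective hc))
  set x := f (Sum.inl 0)
  have hval : ∀ i : Fin 3, (f (Sum.inr i)).val = x.val + 1 ∨ (f (Sum.inr i)).val + 1 = x.val := by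
    intro i
    have := hadj i
    rw [pathGraph_adj] at this
    omega
  have h01 : (f (Sum.inr 0)).val ≠ (f (Sum.inr 1)).val :=
    fun h => hne 0 1 (by decide) (Fin.ext h)
  have h02 : (f (Sum.inr 0)).val ≠ (f (Sum.inr 2)).val :=
    fun h => hne 0 2 (by decide) (Fin.ext h)
  have h12 : (f (Sum.inr 1)).val ≠ (f (Sum.inr 2)).val :=
    fun h => hne 1 2 (by decide) (Fin.ext h)
  have := hval 0
  have := hval 1
  have := hval 2
  omega

lemma path_expand {k : ℕ} (A : Set (Fin (2*k+1))) (hA : A ⊆ {i | ¬ Even i.val})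
    (hne : A.Nonempty) :
    A.ncard < (NSet (pathGraph (2*k+1)) A ∩ {i | Even i.val}).ncard := by
  classical
  set T := NSet (pathGraph (2*k+1)) A ∩ {i | Even i.val} with hT
  have hlt : ∀ i ∈ A, i.val + 1 < 2*k+1 := by
    intro i hi
    have hodd : ¬ Even i.val := hA hi
    have := i.isLt
    rw [Nat.not_even_iff] at hodd
    omega
  set g : Fin (2*k+1) → Fin (2*k+1) := fun i =>
    if h : i.val + 1 < 2*k+1 then ⟨i.val+1, h⟩ else i with hg
  have hgval : ∀ i ∈ A, (g i).val = i.val + 1 := by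
    intro i hi
    rw [hg]
    simp only [dif_pos (hlt i hi)]
  have hinj : Set.InjOn g A := by
    intro a ha b hb hab
    apply Fin.ext
    have h2 := congrArg Fin.val hab
    rw [hgval a ha, hgval b hb] at h2
    omega
  have himgsub : g '' A ⊆ T := by
    rintro _ ⟨i, hi, rfl⟩
    constructor
    · exact ⟨i, hi, by rw [pathGraph_adj]; left; rw [hgval i hi]⟩
    · show Even (g i).val
      have hodd := hA hi
      rw [hgval i hi, Nat.even_add_one]
      exact hodd
  obtain ⟨m, hm, hmin⟩ := Set.exists_min_image A (fun i => i.val) (Set.toFinite A) hne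
  have hm1 : 1 ≤ m.val := by
    have := hA hm
    simp only [Set.mem_setOf_eq, Nat.not_even_iff] at this
    omega
  set p : Fin (2*k+1) := ⟨m.val - 1, by have := m.isLt; omega⟩ with hp
  have hpT : p ∈ T := by
    constructor
    · refine ⟨m, hm, ?_⟩
      rw [pathGraph_adj]
      right
      show m.val - 1 + 1 = m.val
      omega
    · show Even (m.val - 1)
      have := hA hm
      simp only [Set.mem_setOf_eq, Nat.not_even_iff] at this
      rw [Nat.even_iff]
      omega
  have hpnot : p ∉ g '' A := by
    rintro ⟨i, hi, hgi⟩
    have h1 := congrArg Fin.val hgi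
    rw [hgval i hi] at h1
    have h2 := hmin i hi
    have h3 : p.val = m.val - 1 := rfl
    have h4 := m.isLt
    omega
  have hsub : insert p (g '' A) ⊆ T := Set.insert_subset hpT himgsub
  have hcard : (insert p (g '' A)).ncard = (g '' A).ncard + 1 :=
    Set.ncard_insert_of_notMem hpnot (Set.toFinite _)
  have himgcard : (g '' A).ncard = A.ncard := Set.ncard_image_of_injOn hinj
  have hle := Set.ncard_le_ncard hsub (Set.toFinite _)
  omega

lemma indep_mono {V : Type} {G H : SimpleGraph V} (hle : G ≤ H) {S : Set V}
    (h : IndepOn H S) : IndepOn G S :=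
  fun u hu v hv hne hadj => h hu hv hne (hle hadj)

lemma bip_mono {V : Type} {G H : SimpleGraph V} (hle : G ≤ H) {W B : Set V}
    (h : IsBipartition H W B) : IsBipartition G W B :=
  ⟨h.1, h.2.1, indep_mono hle h.2.2.1, indep_mono hle h.2.2.2⟩

lemma cycle_even {n : ℕ} (hn : 3 ≤ n) {W B : Set (Fin n)}
    (hbip : IsBipartition (cycleGraph n) W B) : Even n := by
  obtain ⟨m, rfl⟩ : ∃ m, n = m + 1 := ⟨n - 1, by omega⟩
  have hbip' : IsBipartition (pathGraph (m+1)) W B := bip_mono pathGraph_le_cycleGraph hbip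
  have alt := path_alt hbip'
  set last : Fin (m+1) := ⟨m, by omega⟩ with hlast
  have hadj : (cycleGraph (m+1)).Adj 0 last := by
    rw [cycle_adj_iff hn]
    right; left
    constructor
    · rfl
    · show m = m + 1 - 1
      omega
  have hlastB := alt last
  rw [Nat.even_add_one]
  rcases bip_cases hbip 0 with h0 | h0
  · have hlB : last ∈ B := bip_adj_W hbip hadj h0
    have h0nB : (0 : Fin (m+1)) ∉ B := fun h => bip_not_both hbip h0 h
    rw [hlastB] at hlB
    show ¬ Even m
    tauto
  · have hlW : last ∈ W := bip_adj_B hbip hadj h0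
    have hlnB : last ∉ B := fun h => bip_not_both hbip hlW h
    rw [hlastB] at hlnB
    show ¬ Even m
    tauto

lemma cycle_succ_adj {m : ℕ} (i : Fin (m+3)) : (cycleGraph (m+3)).Adj i (i+1) := by
  rw [cycleGraph_adj]
  right
  show i + 1 - i = 1
  exact add_sub_cancel_left i 1

lemma cycle_balance {n : ℕ} (hn : 3 ≤ n) {W B : Set (Fin n)}
    (hbip : IsBipartition (cycleGraph n) W B) : W.ncard = B.ncard := by
  obtain ⟨m, rfl⟩ : ∃ m, n = m + 3 := ⟨n - 3, by omega⟩
  have hinj : Function.Injective (fun i : Fin (m+3) => i + 1) :=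
    fun a b h => add_left_injective 1 h
  have hWB : (fun i : Fin (m+3) => i + 1) '' W ⊆ B := by
    rintro _ ⟨i, hi, rfl⟩
    exact bip_adj_W hbip (cycle_succ_adj i) hi
  have hBW : (fun i : Fin (m+3) => i + 1) '' B ⊆ W := by
    rintro _ ⟨i, hi, rfl⟩
    exact bip_adj_B hbip (cycle_succ_adj i) hi
  have h1 : W.ncard ≤ B.ncard := by
    rw [← Set.ncard_image_of_injective W hinj]
    exact Set.ncard_le_ncard hWB (Set.toFinite _)
  have h2 : B.ncard ≤ W.ncard := by
    rw [← Set.ncard_image_of_injective B hinj]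
    exact Set.ncard_le_ncard hBW (Set.toFinite _)
  omega

lemma inj_ncard_le {n : ℕ} (S T : Set (Fin n)) (g : Fin n → Fin n)
    (hmaps : ∀ i ∈ S, g i ∈ T) (hinj : Set.InjOn g S) : S.ncard ≤ T.ncard := by
  calc S.ncard = (g '' S).ncard := (Set.ncard_image_of_injOn hinj).symm
    _ ≤ T.ncard := Set.ncard_le_ncard (by rintro _ ⟨i, hi, rfl⟩; exact hmaps i hi)
        (Set.toFinite _)

lemma path_parts {m : ℕ} {W B : Set (Fin (m+1))} (hbip : IsBipartition (pathGraph (m+1)) W B)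
    (hcount : W.ncard + 1 = B.ncard) :
    (0 : Fin (m+1)) ∈ B ∧ Even m ∧ B = {i | Even i.val} ∧ W = {i | ¬ Even i.val} := by
  classical
  have alt := path_alt hbip
  have hWB : ∀ i, i ∈ W ↔ i ∉ B := by
    intro i
    constructor
    · intro hW hB; exact bip_not_both hbip hW hB
    · intro hnB
      rcases bip_cases hbip i with h | h
      · exact h
      · exact absurd h hnB
  have h0B : (0 : Fin (m+1)) ∈ B := by
    by_contra h0
    have hBodd : ∀ i : Fin (m+1), i ∈ B → ¬ Even i.val := by
      intro i hi
      rw [alt i] at hi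
      tauto
    set g : Fin (m+1) → Fin (m+1) := fun i =>
      if h : 1 ≤ i.val then ⟨i.val - 1, by have := i.isLt; omega⟩ else i with hg
    have hgval : ∀ i ∈ B, (g i).val = i.val - 1 := by
      intro i hi
      have h1 : 1 ≤ i.val := by
        have := hBodd i hi
        rw [Nat.not_even_iff] at this
        omega
      rw [hg]; simp only [dif_pos h1]
    have hle : B.ncard ≤ W.ncard := by
      refine inj_ncard_le B W g ?_ ?_
      · intro i hi
        rw [hWB, alt]
        have hodd := hBodd i hi
        rw [Nat.not_even_iff] at hodd
        have : Even (g i).val := by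
          rw [hgval i hi, Nat.even_iff]; omega
        tauto
      · intro a ha b hb hab
        have h2 := congrArg Fin.val hab
        rw [hgval a ha, hgval b hb] at h2
        have ha1 := hBodd a ha
        have hb1 := hBodd b hb
        rw [Nat.not_even_iff] at ha1 hb1
        exact Fin.ext (by omega)
    omega
  have hBeven : B = {i | Even i.val} := by
    ext i
    rw [Set.mem_setOf_eq, alt i]
    tauto
  have hWodd : W = {i | ¬ Even i.val} := by
    ext i
    rw [Set.mem_setOf_eq, hWB, hBeven, Set.mem_setOf_eq]
  refine ⟨h0B, ?_, hBeven, hWodd⟩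
  by_contra hmodd
  rw [Nat.not_even_iff] at hmodd
  set g : Fin (m+1) → Fin (m+1) := fun i =>
    if h : i.val + 1 < m + 1 then ⟨i.val + 1, h⟩ else i with hg
  have hgval : ∀ i ∈ B, (g i).val = i.val + 1 := by
    intro i hi
    rw [hBeven] at hi
    simp only [Set.mem_setOf_eq, Nat.even_iff] at hi
    have h1 : i.val + 1 < m + 1 := by
      have := i.isLt
      rcases Nat.lt_or_ge i.val m with h | h
      · omega
      · exfalso; have : i.val = m := by omega
        omega
    rw [hg]; simp only [dif_pos h1]
  have hle : B.ncard ≤ W.ncard := by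
    refine inj_ncard_le B W g ?_ ?_
    · intro i hi
      have hieven : Even i.val := by rw [hBeven] at hi; exact hi
      rw [hWodd, Set.mem_setOf_eq, hgval i hi, Nat.even_add_one]
      simpa using hieven
    · intro a ha b hb hab
      have h2 := congrArg Fin.val hab
      rw [hgval a ha, hgval b hb] at h2
      exact Fin.ext (by omega)
  omega

theorem statement3 :
    (∀ (V : Type) [Fintype V] (G : SimpleGraph V),
      G.Connected → (∃ W B : Set V, IsBipartition G W B) → ClawFree G →
      (∃ n, Nonempty (G ≃g pathGraph n)) ∨
      (∃ n, Even n ∧ 3 ≤ n ∧ Nonempty (G ≃g cycleGraph n))) ∧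
    (∀ (V : Type) [Fintype V] (G : SimpleGraph V) (W B : Set V),
      IsBipartition G W B →
      ((IrreducibleBip G W B ∧ ClawFree G) ↔
        ∃ k, ∃ φ : pathGraph (2 * k + 1) ≃g G, ∀ i, φ i ∈ B ↔ Even i.val)) := by
  constructor
  · -- part 1
    intro V _ G hconn hex hcf
    obtain ⟨W, B, hbip⟩ := hex
    have hdeg : ∀ v, (G.neighborSet v).ncard ≤ 2 := clawfree_deg_le hbip hcf
    by_cases hex1 : ∃ v, (G.neighborSet v).ncard ≤ 1
    · obtain ⟨v0, hv0⟩ := hex1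
      haveI : Nonempty V := hconn.nonempty
      obtain ⟨m, hm⟩ : ∃ m, Nat.card V = m + 1 :=
        ⟨Nat.card V - 1, by have := Nat.card_pos (α := V); omega⟩
      obtain ⟨φ, -⟩ := path_classify m V G hm hconn hdeg v0 hv0
      exact Or.inl ⟨m+1, ⟨φ.symm⟩⟩
    · push_neg at hex1
      have hdeg2 : ∀ v, (G.neighborSet v).ncard = 2 := fun v => by
        have h1 := hdeg v; have h2 := hex1 v; omega
      obtain ⟨h3, ⟨ψ⟩⟩ := cycle_classify G hconn hdeg2
      exact Or.inr ⟨Nat.card V, cycle_even h3 (bip_map ψ hbip), h3, ⟨ψ⟩⟩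
  · -- part 2
    intro V _ G W B hbip
    constructor
    · rintro ⟨⟨-, hcount, hexp, hconn⟩, hcf⟩
      have hdeg : ∀ v, (G.neighborSet v).ncard ≤ 2 := clawfree_deg_le hbip hcf
      by_cases hex1 : ∃ v, (G.neighborSet v).ncard ≤ 1
      · obtain ⟨v0, hv0⟩ := hex1
        haveI : Nonempty V := hconn.nonempty
        obtain ⟨m, hm⟩ : ∃ m, Nat.card V = m + 1 :=
          ⟨Nat.card V - 1, by have := Nat.card_pos (α := V); omega⟩
        obtain ⟨φ0, -⟩ := path_classify m V G hm hconn hdeg v0 hv0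
        set ψ := φ0.symm with hψdef
        have hbip' := bip_map ψ hbip
        have hcount' : (⇑ψ '' W).ncard + 1 = (⇑ψ '' B).ncard := by
          rw [Set.ncard_image_of_injective _ ψ.injective,
            Set.ncard_image_of_injective _ ψ.injective]
          exact hcount
        obtain ⟨h0B, hmeven, hBeq, -⟩ := path_parts hbip' hcount'
        obtain ⟨k, hk⟩ := hmeven
        have hk2 : m = 2 * k := by omega
        subst hk2
        refine ⟨k, φ0, ?_⟩
        intro i
        have hmem : φ0 i ∈ B ↔ i ∈ ⇑ψ '' B := by
          constructor
          · intro h; exact ⟨φ0 i, h, by simp [hψdef]⟩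
          · rintro ⟨x, hx, hxe⟩
            have hxx : x = φ0 i := by
              have := congrArg φ0 hxe
              simpa [hψdef] using this
            rwa [hxx] at hx
        rw [hmem, hBeq]
        exact Iff.rfl
      · exfalso
        push_neg at hex1
        have hdeg2 : ∀ v, (G.neighborSet v).ncard = 2 := fun v => by
          have h1 := hdeg v; have h2 := hex1 v; omega
        obtain ⟨h3, ⟨ψ⟩⟩ := cycle_classify G hconn hdeg2
        have hbal := cycle_balance h3 (bip_map ψ hbip)
        rw [Set.ncard_image_of_injective _ ψ.injective,
          Set.ncard_image_of_injective _ ψ.injective] at hbal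
        omega
    · rintro ⟨k, φ, hφ⟩
      have hBeq : B = ⇑φ '' {i | Even i.val} := by
        ext x
        constructor
        · intro hx
          refine ⟨φ.symm x, ?_, by simp⟩
          rw [Set.mem_setOf_eq, ← hφ]
          simpa using hx
        · rintro ⟨i, hi, rfl⟩
          exact (hφ i).2 hi
      have hxnB : ∀ x, x ∈ W → x ∉ B := fun x hx hB => bip_not_both hbip hx hB
      have hWeq : W = ⇑φ '' {i | ¬ Even i.val} := by
        ext x
        constructor
        · intro hx
          refine ⟨φ.symm x, ?_, by simp⟩
          rw [Set.mem_setOf_eq, ← hφ]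
          simp only [RelIso.apply_symm_apply]
          exact hxnB x hx
        · rintro ⟨i, hi, rfl⟩
          rcases bip_cases hbip (φ i) with h | h
          · exact h
          · exact absurd ((hφ i).1 h) hi
      refine ⟨⟨hbip, ?_, ?_, ?_⟩, clawfree_of_path φ⟩
      · rw [hWeq, hBeq, Set.ncard_image_of_injective _ φ.injective,
          Set.ncard_image_of_injective _ φ.injective, count_evens, count_odds]
      · intro A hAW hAne
        set A' : Set (Fin (2*k+1)) := ⇑φ.symm '' A with hA'
        have hA'sub : A' ⊆ {i | ¬ Even i.val} := by
          rintro _ ⟨x, hx, rfl⟩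
          have hxW := hAW hx
          rw [hWeq] at hxW
          obtain ⟨i, hi, rfl⟩ := hxW
          simpa using hi
        have hA'ne : A'.Nonempty := hAne.image _
        have hstep := path_expand A' hA'sub hA'ne
        have hAeq : A = ⇑φ '' A' := by
          rw [hA']
          ext x
          simp only [Set.mem_image]
          constructor
          · intro hx; exact ⟨φ.symm x, ⟨x, hx, rfl⟩, by simp⟩
          · rintro ⟨i, ⟨y, hy, rfl⟩, rfl⟩; simpa using hy
        have h1 : (NSet G A ∩ B) = ⇑φ '' (NSet (pathGraph (2*k+1)) A' ∩ {i | Even i.val}) := by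
          rw [Set.image_inter φ.injective, ← NSet_image φ A', ← hAeq, ← hBeq]
        rw [h1, Set.ncard_image_of_injective _ φ.injective, hAeq,
          Set.ncard_image_of_injective _ φ.injective]
        exact hstep
      · exact connected_map φ (pathGraph_connected (2*k))
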